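/- Let σ ≥ 1 and let χ* ∈ (-1,0)^L be a local minimizer of χ ↦ R(χ,σ) at which the gradient of R(·,σ) vanishes. Set M* := (σB^{-1} + Diag(λ⊙(χ*+𝟙_L)))^{-1}. Then the Hessian of R(·,σ) at χ*, namely Λ − Λ(M*⊙M*)Λ, is positive definite (not merely positive semidefinite). -/

import Mathlib

open Matrix

/-- The matrix `C(χ) = σ B⁻¹ + Diag(λ ⊙ (χ + 𝟙))`. -/
noncomputable def Cmat {L : ℕ} (σ : ℝ) (lam : Fin L → ℝ) (B : Matrix (Fin L) (Fin L) ℝ)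
    (χ : Fin L → ℝ) : Matrix (Fin L) (Fin L) ℝ :=
  σ • B⁻¹ + Matrix.diagonal (fun l => lam l * (χ l + 1))

/-- The replica-symmetric objective
`R(χ,σ) = log det(σ B⁻¹ + Diag(λ ⊙ (χ+𝟙))) + (1/2) ∑ λ_l χ_l²`. -/
noncomputable def Rfun {L : ℕ} (σ : ℝ) (lam : Fin L → ℝ) (B : Matrix (Fin L) (Fin L) ℝ)
    (χ : Fin L → ℝ) : ℝ :=
  Real.log (Cmat σ lam B χ).det + (1 / 2) * ∑ l, lam l * χ l ^ 2

section Aux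

variable {L : ℕ}

/-- Quadratic form of `Λ (M ∘ M) Λ` equals a trace. -/
lemma quadform_eq_trace (lam : Fin L → ℝ) (M : Matrix (Fin L) (Fin L) ℝ)
    (hMs : Mᵀ = M) (x : Fin L → ℝ) :
    dotProduct x ((Matrix.diagonal lam * Matrix.hadamard M M * Matrix.diagonal lam) *ᵥ x)
      = Matrix.trace (Matrix.diagonal (fun l => lam l * x l) * M *
          Matrix.diagonal (fun l => lam l * x l) * M) := by
  have hM : ∀ k l, M k l = M l k := by
    intro k l
    have h := congrFun (congrFun hMs l) k
    rw [Matrix.transpose_apply] at h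
    exact h
  have h1 : dotProduct x ((Matrix.diagonal lam * Matrix.hadamard M M * Matrix.diagonal lam) *ᵥ x)
      = ∑ l, ∑ k, x l * (lam l * (M l k * M l k) * lam k * x k) := by
    simp only [dotProduct, Matrix.mulVec, Matrix.mul_diagonal, Matrix.diagonal_mul,
      Matrix.hadamard_apply, Finset.mul_sum]
  have h2 : Matrix.trace (Matrix.diagonal (fun l => lam l * x l) * M *
        Matrix.diagonal (fun l => lam l * x l) * M)
      = ∑ l, ∑ k, lam l * x l * M l k * (lam k * x k) * M k l := by
    have hent : ∀ l k, (Matrix.diagonal (fun l => lam l * x l) * M *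
        Matrix.diagonal (fun l => lam l * x l)) l k = lam l * x l * M l k * (lam k * x k) := by
      intro l k
      rw [Matrix.mul_diagonal, Matrix.diagonal_mul]
    simp only [Matrix.trace, Matrix.diag_apply]
    refine Finset.sum_congr rfl fun l _ => ?_
    rw [Matrix.mul_apply]
    exact Finset.sum_congr rfl fun k _ => by rw [hent]
  rw [h1, h2]
  refine Finset.sum_congr rfl fun l _ => Finset.sum_congr rfl fun k _ => ?_
  rw [hM k l]
  ring

end Aux

set_option maxHeartbeats 1000000 in
/-- for `σ ≥ 1`, at any interior local minimizer `χ* ∈ (-1,0)^L` of `R(·,σ)`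
with vanishing gradient, the Hessian `Λ − Λ(M*⊙M*)Λ`, where
`M* = (σB⁻¹ + Diag(λ⊙(χ*+𝟙)))⁻¹`, is positive definite. -/
theorem stmt5 {L : ℕ} (hL : 0 < L) (lam : Fin L → ℝ) (hlam : ∀ l, 0 < lam l)
    (B : Matrix (Fin L) (Fin L) ℝ) (hB : B.PosDef) (hBdiag : ∀ l, B l l = 1)
    (σ : ℝ) (hσ : 1 ≤ σ)
    (χs : Fin L → ℝ) (hχs : ∀ l, -1 < χs l ∧ χs l < 0)
    (hmin : IsLocalMin (Rfun σ lam B) χs)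
    (hgrad : fderiv ℝ (Rfun σ lam B) χs = 0) :
    (Matrix.diagonal lam
        - Matrix.diagonal lam *
            Matrix.hadamard (Cmat σ lam B χs)⁻¹ (Cmat σ lam B χs)⁻¹ *
          Matrix.diagonal lam).PosDef := by
  classical
  set C : Matrix (Fin L) (Fin L) ℝ := Cmat σ lam B χs with hCdef
  -- C is positive definite
  have hC : C.PosDef := by
    rw [hCdef]
    unfold Cmat
    refine Matrix.PosDef.add_posSemidef ?_ ?_
    · have hBinv : (B⁻¹).PosDef := hB.inv
      refine Matrix.PosDef.of_dotProduct_mulVec_pos ?_ fun y hy => ?_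
      · show (σ • B⁻¹)ᴴ = σ • B⁻¹
        rw [Matrix.conjTranspose_smul, star_trivial, hBinv.isHermitian]
      · have h1 : 0 < dotProduct (star y) (B⁻¹ *ᵥ y) := hBinv.dotProduct_mulVec_pos hy
        have h2 : (σ • B⁻¹) *ᵥ y = σ • (B⁻¹ *ᵥ y) := by
          rw [Matrix.smul_mulVec]
        rw [h2, dotProduct_smul]
        have hσ0 : (0:ℝ) < σ := lt_of_lt_of_le one_pos hσ
        exact smul_pos hσ0 h1
    · refine Matrix.PosSemidef.diagonal fun l => ?_
      show (0:ℝ) ≤ lam l * (χs l + 1)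
      have h1 := (hχs l).1
      have h2 := hlam l
      nlinarith
  have hdetC : C.det ≠ 0 := hC.det_pos.ne'
  set M : Matrix (Fin L) (Fin L) ℝ := C⁻¹ with hMdef
  have hM : M.PosDef := hC.inv
  have hMsymm : Mᵀ = M := hM.isHermitian
  have hCM : C * M = 1 := Matrix.mul_nonsing_inv C (isUnit_iff_ne_zero.mpr hdetC)
  -- square root of M
  open scoped MatrixOrder in
  set W : Matrix (Fin L) (Fin L) ℝ := CFC.sqrt M with hWdef
  open scoped MatrixOrder in
  have hWW : W * W = M := CFC.sqrt_mul_sqrt_self M hM.posSemidef.nonneg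
  open scoped MatrixOrder in
  have hWherm : W.IsHermitian := (CFC.sqrt_nonneg M).posSemidef.1
  have hdetW : W.det ≠ 0 := by
    intro h
    have : M.det = 0 := by rw [← hWW, Matrix.det_mul, h, mul_zero]
    exact hM.det_pos.ne' this
  have hWunit : IsUnit W.det := isUnit_iff_ne_zero.mpr hdetW
  have hWinv : W⁻¹ * W = 1 := Matrix.nonsing_inv_mul W hWunit
  have hWinvW : W * W⁻¹ = 1 := Matrix.mul_nonsing_inv W hWunit
  -- the Hessian matrix is symmetric
  have hHadherm : (Matrix.hadamard M M).IsHermitian := by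
    ext i j
    simp only [Matrix.conjTranspose_apply, Matrix.hadamard_apply, star_trivial]
    have h := congrFun (congrFun hMsymm i) j
    rw [Matrix.transpose_apply] at h
    rw [h]
  have hHerm : (Matrix.diagonal lam
      - Matrix.diagonal lam * Matrix.hadamard M M * Matrix.diagonal lam).IsHermitian := by
    have h1 : (Matrix.diagonal lam).IsHermitian := Matrix.isHermitian_diagonal _
    refine Matrix.IsHermitian.sub h1 ?_
    calc (Matrix.diagonal lam * Matrix.hadamard M M * Matrix.diagonal lam)ᴴ
        = (Matrix.diagonal lam)ᴴ * (Matrix.hadamard M M)ᴴ * (Matrix.diagonal lam)ᴴ := by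
          rw [Matrix.conjTranspose_mul, Matrix.conjTranspose_mul, mul_assoc]
      _ = Matrix.diagonal lam * Matrix.hadamard M M * Matrix.diagonal lam := by
          rw [h1, hHadherm]
  refine Matrix.PosDef.of_dotProduct_mulVec_pos hHerm fun x hx => ?_
  by_contra hcon
  push_neg at hcon
  -- setup matrices for the line
  set E : Matrix (Fin L) (Fin L) ℝ := Matrix.diagonal (fun l => lam l * x l) with hEdef
  have hEherm : E.IsHermitian := Matrix.isHermitian_diagonal _
  set S : Matrix (Fin L) (Fin L) ℝ := W * E * W with hSdef
  have hSherm : S.IsHermitian := by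
    calc Sᴴ = Wᴴ * Eᴴ * Wᴴ := by
          rw [hSdef, Matrix.conjTranspose_mul, Matrix.conjTranspose_mul, mul_assoc]
    _ = S := by rw [hWherm, hEherm]
  set μ : Fin L → ℝ := hSherm.eigenvalues with hμdef
  set U : Matrix (Fin L) (Fin L) ℝ := (hSherm.eigenvectorUnitary : Matrix (Fin L) (Fin L) ℝ)
    with hUdef
  have hUmem := hSherm.eigenvectorUnitary.2
  have hUsU : U * star U = 1 := (Unitary.mem_iff.mp hUmem).2
  have hsUU : star U * U = 1 := (Unitary.mem_iff.mp hUmem).1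
  have hspec : S = U * Matrix.diagonal μ * star U := by
    have := hSherm.spectral_theorem
    simpa using this
  have hdetUsU : U.det * (star U).det = 1 := by
    rw [← Matrix.det_mul, hUsU, Matrix.det_one]
  -- eigenvalue sum of squares equals the trace
  have htr2 : Matrix.trace (S * S) = ∑ i, μ i ^ 2 := by
    rw [hspec]
    have : (U * Matrix.diagonal μ * star U) * (U * Matrix.diagonal μ * star U)
        = U * (Matrix.diagonal μ * Matrix.diagonal μ) * star U := by
      calc (U * Matrix.diagonal μ * star U) * (U * Matrix.diagonal μ * star U)
          = U * Matrix.diagonal μ * (star U * U) * Matrix.diagonal μ * star U := by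
            noncomm_ring
        _ = U * (Matrix.diagonal μ * Matrix.diagonal μ) * star U := by
            rw [hsUU, mul_one]; noncomm_ring
    rw [this, Matrix.trace_mul_cycle, ← mul_assoc, hsUU, one_mul,
      Matrix.diagonal_mul_diagonal, Matrix.trace_diagonal]
    exact Finset.sum_congr rfl fun i _ => (sq (μ i)).symm
  -- the trace identity : trace (S*S) = trace (E*M*E*M)
  have htrS : Matrix.trace (S * S) = Matrix.trace (E * M * E * M) := by
    have h1 : S * S = W * (E * M * E * W) := by
      calc S * S = W * E * (W * W) * E * W := by rw [hSdef]; noncomm_ring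
        _ = W * (E * M * E * W) := by rw [hWW]; noncomm_ring
    rw [h1, Matrix.trace_mul_comm]
    have : E * M * E * W * W = E * M * E * M := by
      rw [mul_assoc (E * M * E), hWW]
    rw [this]
  -- the quadratic form assumption
  have hquad : dotProduct x ((Matrix.diagonal lam * Matrix.hadamard M M
      * Matrix.diagonal lam) *ᵥ x) = ∑ i, μ i ^ 2 := by
    rw [quadform_eq_trace lam M hMsymm x, ← hEdef, ← htrS, htr2]
  have hdotdiag : dotProduct x (Matrix.diagonal lam *ᵥ x) = ∑ l, lam l * x l ^ 2 := by
    simp only [dotProduct, Matrix.mulVec_diagonal]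
    exact Finset.sum_congr rfl fun l _ => by ring
  have hlamx : (0:ℝ) < ∑ l, lam l * x l ^ 2 := by
    have hne : ∃ l, x l ≠ 0 := Function.ne_iff.mp hx
    obtain ⟨l0, hl0⟩ := hne
    refine Finset.sum_pos' (fun l _ => mul_nonneg (hlam l).le (sq_nonneg _))
      ⟨l0, Finset.mem_univ _, mul_pos (hlam l0) (by positivity)⟩
  have hμge : ∑ l, lam l * x l ^ 2 ≤ ∑ i, μ i ^ 2 := by
    have h0 : dotProduct x ((Matrix.diagonal lam
        - Matrix.diagonal lam * Matrix.hadamard M M * Matrix.diagonal lam) *ᵥ x) ≤ 0 := by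
      simpa using hcon
    rw [Matrix.sub_mulVec, dotProduct_sub, hdotdiag, hquad] at h0
    linarith
  have hμpos : (0:ℝ) < ∑ i, μ i ^ 2 := lt_of_lt_of_le hlamx hμge
  have hμne : ∃ i, μ i ≠ 0 := by
    by_contra h
    push_neg at h
    simp only [h] at hμpos
    simp at hμpos
  obtain ⟨i0, hi0⟩ := hμne
  -- the line expansion
  have hCt : ∀ t : ℝ, Cmat σ lam B (χs + t • x) = C + t • E := by
    intro t
    rw [hCdef, hEdef]
    unfold Cmat
    ext i j
    simp only [Matrix.add_apply, Matrix.smul_apply, smul_eq_mul, Pi.add_apply, Pi.smul_apply]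
    by_cases h : i = j
    · subst h
      simp only [Matrix.diagonal_apply_eq]
      ring
    · simp [Matrix.diagonal_apply_ne _ h]
  -- determinant factorization
  have hdet1 : ∀ t : ℝ, Matrix.det (1 + t • S) = ∏ i, (1 + t * μ i) := by
    intro t
    have h1 : (1 : Matrix (Fin L) (Fin L) ℝ) + t • S
        = U * (1 + t • Matrix.diagonal μ) * star U := by
      rw [mul_add, add_mul, mul_one, hUsU, Matrix.mul_smul, Matrix.smul_mul, ← hspec]
    rw [h1, Matrix.det_mul, Matrix.det_mul]
    have h2 : (1 : Matrix (Fin L) (Fin L) ℝ) + t • Matrix.diagonal μ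
        = Matrix.diagonal (fun i => 1 + t * μ i) := by
      ext i j
      by_cases h : i = j
      · subst h
        simp [Matrix.one_apply_eq]
      · simp [Matrix.one_apply_ne h, Matrix.diagonal_apply_ne _ h]
    rw [h2, Matrix.det_diagonal]
    calc U.det * (∏ i, (1 + t * μ i)) * (star U).det
        = (U.det * (star U).det) * ∏ i, (1 + t * μ i) := by ring
      _ = ∏ i, (1 + t * μ i) := by rw [hdetUsU, one_mul]
  have hdetC' : ∀ t : ℝ, Matrix.det (C + t • E) = C.det * ∏ i, (1 + t * μ i) := by
    intro t
    have h1 : C + t • E = C * (1 + t • (M * E)) := by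
      rw [mul_add, mul_one, Matrix.mul_smul, ← mul_assoc, hCM, one_mul]
    have h2 : (1 : Matrix (Fin L) (Fin L) ℝ) + t • (M * E)
        = W * (1 + t • S) * W⁻¹ := by
      have hMS : W * S * W⁻¹ = M * E := by
        calc W * S * W⁻¹ = W * W * E * (W * W⁻¹) := by rw [hSdef]; noncomm_ring
          _ = M * E := by rw [hWinvW, mul_one, hWW]
      rw [mul_add, add_mul, mul_one, hWinvW, Matrix.mul_smul, Matrix.smul_mul, hMS]
    rw [h1, Matrix.det_mul, h2, Matrix.det_mul, Matrix.det_mul, Matrix.det_nonsing_inv]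
    rw [hdet1]
    field_simp
    rw [mul_comm W.det, mul_assoc, Ring.mul_inverse_cancel _ hWunit, mul_one]
  -- expansion of Rfun along the line
  set q1 : ℝ := ∑ l, lam l * χs l * x l with hq1def
  set q2 : ℝ := ∑ l, lam l * x l ^ 2 with hq2def
  have hRfun : ∀ t : ℝ, Rfun σ lam B (χs + t • x)
      = Real.log (C.det * ∏ i, (1 + t * μ i))
        + ((1 / 2) * ∑ l, lam l * χs l ^ 2 + t * q1 + t ^ 2 * ((1/2) * q2)) := by
    intro t
    unfold Rfun
    rw [hCt t, hdetC' t]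
    congr 1
    have hsum : ∑ l, lam l * ((χs + t • x) l) ^ 2
        = ∑ l, (lam l * χs l ^ 2 + (2 * t) * (lam l * χs l * x l) + t ^ 2 * (lam l * x l ^ 2)) := by
      refine Finset.sum_congr rfl fun l _ => ?_
      simp only [Pi.add_apply, Pi.smul_apply, smul_eq_mul]
      ring
    rw [hsum, Finset.sum_add_distrib, Finset.sum_add_distrib, ← Finset.mul_sum, ← Finset.mul_sum,
      ← hq1def, ← hq2def]
    ring
  -- local minimality along the line, in both directions
  have hcont : Filter.Tendsto (fun t : ℝ => χs + t • x) (nhds 0) (nhds χs) := by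
    have : Continuous (fun t : ℝ => χs + t • x) :=
      continuous_const.add (continuous_id.smul continuous_const)
    have h0 : (fun t : ℝ => χs + t • x) 0 = χs := by simp
    simpa [h0] using this.tendsto 0
  have hmin1 : ∀ᶠ t : ℝ in nhds 0, Rfun σ lam B χs ≤ Rfun σ lam B (χs + t • x) :=
    hcont.eventually hmin
  have hcontneg : Filter.Tendsto (fun t : ℝ => -t) (nhds (0:ℝ)) (nhds (0:ℝ)) := by
    simpa using (continuous_neg (G := ℝ)).tendsto 0
  have hmin2 : ∀ᶠ t : ℝ in nhds 0, Rfun σ lam B χs ≤ Rfun σ lam B (χs + (-t) • x) :=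
    hcontneg.eventually hmin1
  set Mb : ℝ := 1 + ∑ i, |μ i| with hMbdef
  have hMbpos : 0 < Mb := by
    have : (0:ℝ) ≤ ∑ i, |μ i| := Finset.sum_nonneg fun i _ => abs_nonneg _
    rw [hMbdef]; linarith
  have hμle : ∀ i, |μ i| < Mb := by
    intro i
    have h1 : |μ i| ≤ ∑ j, |μ j| :=
      Finset.single_le_sum (fun j _ => abs_nonneg (μ j)) (Finset.mem_univ i)
    rw [hMbdef]; linarith
  have hsmall : ∀ᶠ t : ℝ in nhds 0, |t| < 1 / Mb := by
    have hball := Metric.ball_mem_nhds (0:ℝ) (by positivity : (0:ℝ) < 1 / Mb)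
    refine Filter.eventually_of_mem hball fun y hy => ?_
    simpa [Real.dist_eq, Metric.mem_ball] using hy
  have hall := (hmin1.and (hmin2.and hsmall))
  -- pick t ≠ 0
  haveI : Filter.NeBot (nhdsWithin (0:ℝ) {(0:ℝ)}ᶜ) := inferInstance
  have hall' : ∀ᶠ s : ℝ in nhdsWithin (0:ℝ) {(0:ℝ)}ᶜ,
      (Rfun σ lam B χs ≤ Rfun σ lam B (χs + s • x) ∧
        (Rfun σ lam B χs ≤ Rfun σ lam B (χs + (-s) • x) ∧ |s| < 1 / Mb)) ∧
      s ∈ ({(0:ℝ)}ᶜ : Set ℝ) :=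
    (hall.filter_mono nhdsWithin_le_nhds).and eventually_mem_nhdsWithin
  obtain ⟨t, ⟨ht1, ht2, ht3⟩, ht0'⟩ := hall'.exists
  have ht0 : t ≠ 0 := by simpa using ht0'
  -- positivity of the factors
  have hfac : ∀ s : ℝ, |s| < 1 / Mb → ∀ i, 0 < 1 + s * μ i := by
    intro s hs i
    have h1 : |s * μ i| < 1 := by
      rw [abs_mul]
      calc |s| * |μ i| ≤ |s| * Mb := by
            exact mul_le_mul_of_nonneg_left (hμle i).le (abs_nonneg s)
        _ < (1 / Mb) * Mb := by
            exact mul_lt_mul_of_pos_right hs hMbpos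
        _ = 1 := by field_simp
    have := neg_abs_le (s * μ i)
    have := abs_lt.mp h1
    linarith
  have hlogsum : ∀ s : ℝ, |s| < 1 / Mb →
      Real.log (C.det * ∏ i, (1 + s * μ i))
        = Real.log C.det + ∑ i, Real.log (1 + s * μ i) := by
    intro s hs
    have hprodpos : (0:ℝ) < ∏ i, (1 + s * μ i) :=
      Finset.prod_pos fun i _ => hfac s hs i
    rw [Real.log_mul hdetC hprodpos.ne', Real.log_prod]
    intro i _
    exact (hfac s hs i).ne'
  have hR0 : Rfun σ lam B χs
      = Real.log C.det + (1 / 2) * ∑ l, lam l * χs l ^ 2 := by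
    have h := hRfun 0
    simp only [zero_smul, add_zero, zero_mul, mul_zero] at h
    simpa using h
  have hnegt : |(-t)| < 1 / Mb := by rwa [abs_neg]
  have hA1 : Rfun σ lam B χs ≤ Real.log C.det + ∑ i, Real.log (1 + t * μ i)
      + ((1 / 2) * ∑ l, lam l * χs l ^ 2 + t * q1 + t ^ 2 * ((1/2) * q2)) := by
    have := ht1
    rw [hRfun t, hlogsum t ht3] at this
    linarith
  have hA2 : Rfun σ lam B χs ≤ Real.log C.det + ∑ i, Real.log (1 + (-t) * μ i)
      + ((1 / 2) * ∑ l, lam l * χs l ^ 2 + (-t) * q1 + (-t) ^ 2 * ((1/2) * q2)) := by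
    have := ht2
    rw [hRfun (-t), hlogsum (-t) hnegt] at this
    linarith
  -- combine: 0 ≤ Σ log((1+tμ)(1-tμ)) + t² q2
  have hcomb : 0 ≤ ∑ i, (Real.log (1 + t * μ i) + Real.log (1 + (-t) * μ i)) + t ^ 2 * q2 := by
    rw [hR0] at hA1 hA2
    rw [Finset.sum_add_distrib]
    nlinarith [hA1, hA2]
  -- strict bound on the log sum
  have hbound : ∑ i, (Real.log (1 + t * μ i) + Real.log (1 + (-t) * μ i))
      < ∑ i, (-(t ^ 2 * μ i ^ 2)) := by
    refine Finset.sum_lt_sum (fun i _ => ?_) ⟨i0, Finset.mem_univ _, ?_⟩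
    · have h1 : (0:ℝ) < 1 + t * μ i := hfac t ht3 i
      have h2 : (0:ℝ) < 1 + (-t) * μ i := hfac (-t) hnegt i
      have h3 : Real.log (1 + t * μ i) + Real.log (1 + (-t) * μ i)
          = Real.log ((1 + t * μ i) * (1 + (-t) * μ i)) := (Real.log_mul h1.ne' h2.ne').symm
      have h4 : (1 + t * μ i) * (1 + (-t) * μ i) = 1 - t ^ 2 * μ i ^ 2 := by ring
      have h5 : (0:ℝ) < 1 - t ^ 2 * μ i ^ 2 := by
        have := mul_pos h1 h2
        linarith [h4 ▸ this]
      have h6 := Real.log_le_sub_one_of_pos h5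
      rw [h3, h4]
      linarith
    · have h1 : (0:ℝ) < 1 + t * μ i0 := hfac t ht3 i0
      have h2 : (0:ℝ) < 1 + (-t) * μ i0 := hfac (-t) hnegt i0
      have h3 : Real.log (1 + t * μ i0) + Real.log (1 + (-t) * μ i0)
          = Real.log ((1 + t * μ i0) * (1 + (-t) * μ i0)) := (Real.log_mul h1.ne' h2.ne').symm
      have h4 : (1 + t * μ i0) * (1 + (-t) * μ i0) = 1 - t ^ 2 * μ i0 ^ 2 := by ring
      have h5 : (0:ℝ) < 1 - t ^ 2 * μ i0 ^ 2 := by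
        have := mul_pos h1 h2
        linarith [h4 ▸ this]
      have hne1 : 1 - t ^ 2 * μ i0 ^ 2 ≠ 1 := by
        have ht2pos : 0 < t ^ 2 := by positivity
        have hμ2pos : 0 < μ i0 ^ 2 := by positivity
        nlinarith
      have h6 := Real.log_lt_sub_one_of_pos h5 hne1
      rw [h3, h4]
      linarith
  have hfin : ∑ i, (-(t ^ 2 * μ i ^ 2)) + t ^ 2 * q2 ≤ 0 := by
    have h1 : ∑ i, (-(t ^ 2 * μ i ^ 2)) = -(t ^ 2 * ∑ i, μ i ^ 2) := by
      rw [Finset.mul_sum, Finset.sum_neg_distrib]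
    rw [h1]
    have ht2 : (0:ℝ) ≤ t ^ 2 := sq_nonneg t
    nlinarith [hμge]
  linarith
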